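/- The star-triangle relations: given real numbers a₁₂, a₂₃, a₃₁ with a₁₂a₂₃ + a₂₃a₃₁ + a₃₁a₁₂ ≠ 0, the values A₂₃ = -a₂₃/(a₁₂a₂₃+a₂₃a₃₁+a₃₁a₁₂), A₃₁ = -a₃₁/(a₁₂a₂₃+a₂₃a₃₁+a₃₁a₁₂), A₁₂ = -a₁₂/(a₁₂a₂₃+a₂₃a₃₁+a₃₁a₁₂) form the unique solution of the six equations: 1 + A₂₃(a₁₂+a₃₁) = -A₃₁a₁₂ = -A₁₂a₃₁, 1 + A₃₁(a₂₃+a₁₂) = -A₁₂a₂₃ = -A₂₃a₁₂, 1 + A₁₂(a₂₃+a₃₁) = -A₂₃a₃₁ = -A₃₁a₂₃. -/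

import Mathlib

/-- The star-triangle relations: explicit unique solution of the six linear
equations for the shifted coefficients of a T-net hexahedron. -/
theorem star_triangle_unique_solution (a₁₂ a₂₃ a₃₁ : ℝ)
    (hD : a₁₂ * a₂₃ + a₂₃ * a₃₁ + a₃₁ * a₁₂ ≠ 0) :
    (let D := a₁₂ * a₂₃ + a₂₃ * a₃₁ + a₃₁ * a₁₂
     let A₂₃ := -a₂₃ / D
     let A₃₁ := -a₃₁ / D
     let A₁₂ := -a₁₂ / D
     (1 + A₂₃ * (a₁₂ + a₃₁) = -A₃₁ * a₁₂ ∧ -A₃₁ * a₁₂ = -A₁₂ * a₃₁) ∧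
     (1 + A₃₁ * (a₂₃ + a₁₂) = -A₁₂ * a₂₃ ∧ -A₁₂ * a₂₃ = -A₂₃ * a₁₂) ∧
     (1 + A₁₂ * (a₂₃ + a₃₁) = -A₂₃ * a₃₁ ∧ -A₂₃ * a₃₁ = -A₃₁ * a₂₃)) ∧
    ∀ A₂₃ A₃₁ A₁₂ : ℝ,
      (1 + A₂₃ * (a₁₂ + a₃₁) = -A₃₁ * a₁₂ ∧ -A₃₁ * a₁₂ = -A₁₂ * a₃₁) →
      (1 + A₃₁ * (a₂₃ + a₁₂) = -A₁₂ * a₂₃ ∧ -A₁₂ * a₂₃ = -A₂₃ * a₁₂) →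
      (1 + A₁₂ * (a₂₃ + a₃₁) = -A₂₃ * a₃₁ ∧ -A₂₃ * a₃₁ = -A₃₁ * a₂₃) →
      A₂₃ = -a₂₃ / (a₁₂ * a₂₃ + a₂₃ * a₃₁ + a₃₁ * a₁₂) ∧
      A₃₁ = -a₃₁ / (a₁₂ * a₂₃ + a₂₃ * a₃₁ + a₃₁ * a₁₂) ∧
      A₁₂ = -a₁₂ / (a₁₂ * a₂₃ + a₂₃ * a₃₁ + a₃₁ * a₁₂) := by
  constructor
  · refine ⟨⟨?_, ?_⟩, ⟨?_, ?_⟩, ⟨?_, ?_⟩⟩ <;> field_simp <;> linear_combination -mul_inv_cancel₀ hD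
  · rintro A₂₃ A₃₁ A₁₂ ⟨e1, e1'⟩ ⟨e2, e2'⟩ ⟨e3, e3'⟩
    refine ⟨?_, ?_, ?_⟩ <;> rw [eq_div_iff hD]
    · linear_combination a₂₃ * e2 + a₂₃ * e2' - (a₂₃ + a₁₂) * e3'
    · linear_combination a₃₁ * e3 + a₃₁ * e3' - (a₃₁ + a₂₃) * e1'
    · linear_combination a₁₂ * e1 + a₁₂ * e1' - (a₁₂ + a₃₁) * e2'
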